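/- Let $z \in \mathbb{R}^n$, $z \ne 0$, and $r_0 \in \mathbb{R}^m$. For $\rho \ge 0$, the minimum of $\frac12\|\Delta z - r_0\|_2^2$ over all matrices $\Delta$ with spectral norm $\|\Delta\|_2 \le \rho$ equals $\frac12\big(\|r_0\|_2 - \rho\|z\|_2\big)_+^2$. -/

import Mathlib

open Filter Matrix

noncomputable def l2 {n : ℕ} (v : Fin n → ℝ) : ℝ := Real.sqrt (∑ i, v i ^ 2)
noncomputable def l1 {n : ℕ} (v : Fin n → ℝ) : ℝ := ∑ i, |v i|
noncomputable def linf {n : ℕ} (v : Fin n → ℝ) : ℝ := ⨆ i, |v i|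
noncomputable def maxNorm {m n : ℕ} (W : Matrix (Fin m) (Fin n) ℝ) : ℝ := ⨆ i, ⨆ j, |W i j|
noncomputable def spec {m n : ℕ} (W : Matrix (Fin m) (Fin n) ℝ) : ℝ :=
  sSup {c | ∃ v : Fin n → ℝ, l2 v = 1 ∧ c = l2 (W.mulVec v)}
noncomputable def l0 {n : ℕ} (v : Fin n → ℝ) : ℕ := (Finset.univ.filter fun j => v j ≠ 0).card

lemma l2_nonneg {n : ℕ} (v : Fin n → ℝ) : 0 ≤ l2 v := Real.sqrt_nonneg _

lemma l2_sq {n : ℕ} (v : Fin n → ℝ) : (l2 v) ^ 2 = ∑ i, v i ^ 2 :=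
  Real.sq_sqrt (Finset.sum_nonneg fun i _ => sq_nonneg _)

lemma l2_pos {n : ℕ} {v : Fin n → ℝ} (hv : v ≠ 0) : 0 < l2 v := by
  rcases Function.ne_iff.1 hv with ⟨i, hi⟩
  apply Real.sqrt_pos.2
  exact Finset.sum_pos' (fun j _ => sq_nonneg _) ⟨i, Finset.mem_univ i, (sq_nonneg _).lt_of_ne (Ne.symm (pow_ne_zero 2 hi))⟩

lemma l2_smul {n : ℕ} (a : ℝ) (v : Fin n → ℝ) : l2 (a • v) = |a| * l2 v := by
  simp only [l2, Pi.smul_apply, smul_eq_mul, mul_pow, ← Finset.mul_sum]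
  rw [Real.sqrt_mul (sq_nonneg a), Real.sqrt_sq_eq_abs]

lemma cauchy {n : ℕ} (v w : Fin n → ℝ) : |∑ i, v i * w i| ≤ l2 v * l2 w := by
  have h := Finset.sum_mul_sq_le_sq_mul_sq Finset.univ v w
  have h2 := Real.sqrt_le_sqrt h
  rwa [Real.sqrt_sq_eq_abs,
    Real.sqrt_mul (Finset.sum_nonneg fun i _ => sq_nonneg _)] at h2

lemma spec_le' {m n : ℕ} (W : Matrix (Fin m) (Fin n) ℝ) (ρ : ℝ) (hρ : 0 ≤ ρ)
    (h : ∀ v : Fin n → ℝ, l2 v = 1 → l2 (W.mulVec v) ≤ ρ) :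
    sSup {c | ∃ v : Fin n → ℝ, l2 v = 1 ∧ c = l2 (W.mulVec v)} ≤ ρ :=
  Real.sSup_le (by rintro c ⟨v, hv, rfl⟩; exact h v hv) hρ

lemma l2_mulVec_le_frob {m n : ℕ} (W : Matrix (Fin m) (Fin n) ℝ) (v : Fin n → ℝ) :
    l2 (W.mulVec v) ≤ Real.sqrt (∑ i, ∑ j, W i j ^ 2) * l2 v := by
  have key : ∑ i, (W.mulVec v) i ^ 2 ≤ (∑ i, ∑ j, W i j ^ 2) * ∑ j, v j ^ 2 := by
    rw [Finset.sum_mul]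
    apply Finset.sum_le_sum
    intro i _
    simpa [Matrix.mulVec, dotProduct] using
      Finset.sum_mul_sq_le_sq_mul_sq Finset.univ (W i) v
  calc l2 (W.mulVec v) ≤ Real.sqrt ((∑ i, ∑ j, W i j ^ 2) * ∑ j, v j ^ 2) :=
        Real.sqrt_le_sqrt key
    _ = _ := Real.sqrt_mul (Finset.sum_nonneg fun i _ => Finset.sum_nonneg fun j _ => sq_nonneg _) _

lemma l2_mulVec_le {m n : ℕ} (W : Matrix (Fin m) (Fin n) ℝ) {ρ : ℝ}
    (hW : sSup {c | ∃ v : Fin n → ℝ, l2 v = 1 ∧ c = l2 (W.mulVec v)} ≤ ρ)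
    (z : Fin n → ℝ) (hz : z ≠ 0) : l2 (W.mulVec z) ≤ ρ * l2 z := by
  have hzpos := l2_pos hz
  have hbdd : BddAbove {c | ∃ v : Fin n → ℝ, l2 v = 1 ∧ c = l2 (W.mulVec v)} := by
    refine ⟨Real.sqrt (∑ i, ∑ j, W i j ^ 2), ?_⟩
    rintro c ⟨v, hv, rfl⟩
    calc l2 (W.mulVec v) ≤ Real.sqrt (∑ i, ∑ j, W i j ^ 2) * l2 v := l2_mulVec_le_frob W v
      _ = _ := by rw [hv, mul_one]
  have hunit : l2 ((l2 z)⁻¹ • z) = 1 := by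
    rw [l2_smul, abs_of_pos (inv_pos.2 hzpos), inv_mul_cancel₀ hzpos.ne']
  have hmem : l2 (W.mulVec ((l2 z)⁻¹ • z)) ∈
      {c | ∃ v : Fin n → ℝ, l2 v = 1 ∧ c = l2 (W.mulVec v)} := ⟨_, hunit, rfl⟩
  have := le_csSup hbdd hmem
  rw [Matrix.mulVec_smul, l2_smul, abs_of_pos (inv_pos.2 hzpos)] at this
  have h2 := this.trans hW
  calc l2 (W.mulVec z) = l2 z * ((l2 z)⁻¹ * l2 (W.mulVec z)) := by
        field_simp
    _ ≤ l2 z * ρ := by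
        exact mul_le_mul_of_nonneg_left h2 hzpos.le
    _ = ρ * l2 z := mul_comm _ _

lemma rank_one_mulVec {m n : ℕ} (c : ℝ) (u : Fin m → ℝ) (z v : Fin n → ℝ) :
    (Matrix.of fun i j => c * u i * z j).mulVec v = (c * ∑ j, z j * v j) • u := by
  funext i
  simp only [Matrix.mulVec, dotProduct, Matrix.of_apply, Pi.smul_apply, smul_eq_mul,
    mul_assoc, ← Finset.mul_sum]
  ring

lemma l2_add_le {n : ℕ} (a b : Fin n → ℝ) : l2 (a + b) ≤ l2 a + l2 b := by
  have hsum : ∑ i, (a + b) i ^ 2 ≤ (l2 a + l2 b) ^ 2 := by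
    have hab : ∑ i, a i * b i ≤ l2 a * l2 b := (le_abs_self _).trans (cauchy a b)
    have : (l2 a + l2 b) ^ 2 = (∑ i, a i ^ 2) + 2 * (l2 a * l2 b) + ∑ i, b i ^ 2 := by
      rw [add_sq, l2_sq, l2_sq]; ring
    rw [this]
    have expand : ∑ i, (a + b) i ^ 2 =
        (∑ i, a i ^ 2) + 2 * (∑ i, a i * b i) + ∑ i, b i ^ 2 := by
      simp only [Pi.add_apply, add_sq, Finset.sum_add_distrib, Finset.mul_sum, mul_assoc]
    rw [expand]
    linarith
  calc l2 (a + b) ≤ Real.sqrt ((l2 a + l2 b) ^ 2) := Real.sqrt_le_sqrt hsum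
    _ = l2 a + l2 b := by
        rw [Real.sqrt_sq (add_nonneg (l2_nonneg a) (l2_nonneg b))]

theorem stmt11 {m n : ℕ} (z : Fin n → ℝ) (hz : z ≠ 0) (r0 : Fin m → ℝ)
    (ρ : ℝ) (hρ : 0 ≤ ρ) :
    IsLeast {c | ∃ Δ : Matrix (Fin m) (Fin n) ℝ, spec Δ ≤ ρ ∧
        c = (1 / 2) * (l2 (Δ.mulVec z - r0)) ^ 2}
      ((1 / 2) * (max (l2 r0 - ρ * l2 z) 0) ^ 2) := by
  have hZ : 0 < l2 z := l2_pos hz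
  have hzz : ∑ j, z j * z j = (l2 z) ^ 2 := by
    rw [l2_sq]; exact Finset.sum_congr rfl fun j _ => (sq (z j)).symm
  constructor
  · -- membership
    by_cases hcase : l2 r0 ≤ ρ * l2 z
    · refine ⟨Matrix.of fun i j => (1 / (l2 z) ^ 2) * r0 i * z j, ?_, ?_⟩
      · rw [spec]
        apply spec_le' _ _ hρ
        intro v hv
        rw [rank_one_mulVec, l2_smul]
        calc |1 / l2 z ^ 2 * ∑ j, z j * v j| * l2 r0
            ≤ 1 / l2 z ^ 2 * (l2 z * l2 v) * l2 r0 := by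
              apply mul_le_mul_of_nonneg_right _ (l2_nonneg r0)
              rw [abs_mul, abs_of_pos (by positivity : (0:ℝ) < 1 / l2 z ^ 2)]
              exact mul_le_mul_of_nonneg_left (cauchy z v) (by positivity)
          _ = l2 r0 / l2 z := by rw [hv]; field_simp
          _ ≤ ρ := by rw [div_le_iff₀ hZ]; linarith
      · rw [rank_one_mulVec, hzz]
        have h1 : (1 / l2 z ^ 2 * l2 z ^ 2) = 1 := by field_simp
        rw [h1, one_smul, sub_self]
        have : l2 (0 : Fin m → ℝ) = 0 := by simp [l2]
        rw [this, max_eq_right (by linarith : l2 r0 - ρ * l2 z ≤ 0)]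
    · push_neg at hcase
      have hR : 0 < l2 r0 := lt_of_le_of_lt (by positivity) hcase
      refine ⟨Matrix.of fun i j => (ρ / (l2 z * l2 r0)) * r0 i * z j, ?_, ?_⟩
      · rw [spec]
        apply spec_le' _ _ hρ
        intro v hv
        rw [rank_one_mulVec, l2_smul]
        calc |ρ / (l2 z * l2 r0) * ∑ j, z j * v j| * l2 r0
            ≤ ρ / (l2 z * l2 r0) * (l2 z * l2 v) * l2 r0 := by
              apply mul_le_mul_of_nonneg_right _ (l2_nonneg r0)
              rw [abs_mul, abs_of_nonneg (by positivity : (0:ℝ) ≤ ρ / (l2 z * l2 r0))]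
              exact mul_le_mul_of_nonneg_left (cauchy z v) (by positivity)
          _ = ρ := by rw [hv]; field_simp
      · rw [rank_one_mulVec, hzz]
        have key : (ρ / (l2 z * l2 r0) * l2 z ^ 2) • r0 - r0 =
            (ρ * l2 z / l2 r0 - 1) • r0 := by
          rw [sub_smul, one_smul]
          congr 2
          field_simp
        rw [key, l2_smul, abs_of_nonpos (by rw [sub_nonpos, div_le_one hR]; linarith)]
        have hval : -(ρ * l2 z / l2 r0 - 1) * l2 r0 = l2 r0 - ρ * l2 z := by
          field_simp; ring
        rw [hval, max_eq_left (by linarith : (0:ℝ) ≤ l2 r0 - ρ * l2 z)]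
  · -- lower bound
    rintro c ⟨Δ, hΔ, rfl⟩
    have h1 : l2 (Δ.mulVec z) ≤ ρ * l2 z := l2_mulVec_le Δ hΔ z hz
    have htri : l2 r0 ≤ l2 (Δ.mulVec z) + l2 (Δ.mulVec z - r0) := by
      have : r0 = Δ.mulVec z + (-(Δ.mulVec z - r0)) := by abel
      calc l2 r0 = l2 (Δ.mulVec z + (-(Δ.mulVec z - r0))) := by rw [← this]
        _ ≤ l2 (Δ.mulVec z) + l2 (-(Δ.mulVec z - r0)) := l2_add_le _ _
        _ = l2 (Δ.mulVec z) + l2 (Δ.mulVec z - r0) := by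
            rw [show -(Δ.mulVec z - r0) = (-1 : ℝ) • (Δ.mulVec z - r0) by simp, l2_smul]
            norm_num
    have hle : max (l2 r0 - ρ * l2 z) 0 ≤ l2 (Δ.mulVec z - r0) :=
      max_le (by linarith) (l2_nonneg _)
    have := pow_le_pow_left₀ (le_max_right _ 0) hle 2
    linarith
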